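/- arXiv:1009.4967 — 2 statements merged into one kernel-verified Lean document; each statement's English description precedes it below -/
import Mathlib

section
/- Assume the uniform boundedness condition (M-bd): ℙ-almost surely F₀(−M) = 0 and F₀(M) = 1 for a fixed constant M < ∞. Let Ψ_F and Ψ_{F_r} be the last-passage time constants obtained by using F_j, respectively the r-fold convolution F_{r,j} = F_{rj} * F_{rj+1} * ⋯ * F_{rj+r−1}, as the distribution of row j. If r = r(α) is a positive-integer-valued function with r → ∞ and r√α → 0 as α ↓ 0, then lim_{α↓0} α^{−1/2} | Ψ_F(α,1) − (1/r) Ψ_{F_r}(αr, 1) | = 0. -/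
open MeasureTheory ProbabilityTheory Filter Set Topology

noncomputable section

/-- Number of steps of an up-right lattice path from `z₁` to `z₂`. -/
def pathLen (z₁ z₂ : ℕ × ℕ) : ℕ := (z₂.1 - z₁.1) + (z₂.2 - z₁.2)

/-- `p` is a weakly nondecreasing nearest-neighbor lattice path from `z₁` to `z₂`. -/
def IsUpRightPath (z₁ z₂ : ℕ × ℕ) (p : ℕ → ℕ × ℕ) : Prop :=
  p 0 = z₁ ∧ p (pathLen z₁ z₂) = z₂ ∧
    ∀ k < pathLen z₁ z₂,
      p (k + 1) = ((p k).1 + 1, (p k).2) ∨ p (k + 1) = ((p k).1, (p k).2 + 1)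

/-- Last-passage time over weakly nondecreasing paths. -/
def LPP (X : ℕ × ℕ → ℝ) (z₁ z₂ : ℕ × ℕ) : ℝ :=
  sSup {s | ∃ p : ℕ → ℕ × ℕ, IsUpRightPath z₁ z₂ p ∧
    s = ∑ k ∈ Finset.range (pathLen z₁ z₂ + 1), X (p k)}

/-- Coarse-grained weights: the lattice is tiled with `1 × r` blocks
`B_r(x,y) = {(x, ry + k) : k = 0,…,r−1}` and the weights in each block are added up.  On
row `j` of the rescaled lattice the block weight has distribution
`F_{r,j} = F_{rj} * F_{rj+1} * ⋯ * F_{rj+r−1}` (convolution). -/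
def blockWeight (r : ℕ) (X : ℕ × ℕ → ℝ) (z : ℕ × ℕ) : ℝ :=
  ∑ k ∈ Finset.range r, X (z.1, r * z.2 + k)

namespace CG

lemma pathLen_zero (w : ℕ × ℕ) : pathLen (0,0) w = w.1 + w.2 := by
  simp [pathLen]

lemma coord_sum {w : ℕ × ℕ} {p : ℕ → ℕ × ℕ} (hp : IsUpRightPath (0,0) w p) :
    ∀ k ≤ pathLen (0,0) w, (p k).1 + (p k).2 = k := by
  intro k
  induction k with
  | zero => intro _; rw [hp.1]; rfl
  | succ k ih =>
    intro hk
    have hk' : k < pathLen (0,0) w := hk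
    have := ih (le_of_lt hk')
    rcases hp.2.2 k hk' with h | h <;> rw [h] <;> simp <;> omega

lemma path_mono {w : ℕ × ℕ} {p : ℕ → ℕ × ℕ} (hp : IsUpRightPath (0,0) w p) :
    ∀ k' ≤ pathLen (0,0) w, ∀ k ≤ k', (p k).1 ≤ (p k').1 ∧ (p k).2 ≤ (p k').2 := by
  intro k'
  induction k' with
  | zero => intro _ k hk; interval_cases k; exact ⟨le_refl _, le_refl _⟩
  | succ k' ih =>
    intro hk' k hk
    rcases Nat.lt_or_ge k (k'+1) with h | h
    · have h2 := ih (le_of_lt hk') k (by omega)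
      rcases hp.2.2 k' hk' with h3 | h3 <;> rw [h3] <;> simp <;> omega
    · have : k = k' + 1 := by omega
      subst this; exact ⟨le_refl _, le_refl _⟩

lemma exists_path (w : ℕ × ℕ) : ∃ p, IsUpRightPath (0,0) w p := by
  refine ⟨fun k => if k ≤ w.1 then (k, 0) else (w.1, k - w.1), ?_, ?_, ?_⟩
  · simp
  · rw [pathLen_zero]
    rcases Nat.eq_zero_or_pos w.2 with h | h
    · simp only [h, add_zero, le_refl, if_true]
      ext <;> simp [h] <;> omega
    · have : ¬ (w.1 + w.2 ≤ w.1) := by omega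
      simp only [this, if_false]
      ext <;> simp <;> omega
  · intro k hk
    rw [pathLen_zero] at hk
    rcases Nat.lt_or_ge k w.1 with h | h
    · left; simp [Nat.succ_le_of_lt h, le_of_lt h]
    · right
      rcases Nat.eq_or_lt_of_le h with h2 | h2
      · have : ¬ (k + 1 ≤ w.1) := by omega
        simp [this, ← h2]
      · have h3 : ¬ (k + 1 ≤ w.1) := by omega
        have h4 : ¬ (k ≤ w.1) := by omega
        simp [h3, h4]
        omega


def lppSet (X : ℕ × ℕ → ℝ) (w : ℕ × ℕ) : Set ℝ :=
  {s | ∃ p : ℕ → ℕ × ℕ, IsUpRightPath (0,0) w p ∧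
    s = ∑ k ∈ Finset.range (pathLen (0,0) w + 1), X (p k)}

lemma LPP_eq (X : ℕ × ℕ → ℝ) (w : ℕ × ℕ) : LPP X (0,0) w = sSup (lppSet X w) := rfl

lemma lppSet_nonempty (X : ℕ × ℕ → ℝ) (w : ℕ × ℕ) : (lppSet X w).Nonempty := by
  obtain ⟨p, hp⟩ := exists_path w
  exact ⟨_, p, hp, rfl⟩

lemma mem_lppSet_le {X : ℕ × ℕ → ℝ} {M : ℝ} (hX : ∀ z, |X z| ≤ M) {w : ℕ × ℕ}
    {s : ℝ} (hs : s ∈ lppSet X w) : s ≤ (pathLen (0,0) w + 1 : ℕ) * M := by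
  obtain ⟨p, _, rfl⟩ := hs
  calc ∑ k ∈ Finset.range (pathLen (0,0) w + 1), X (p k)
      ≤ ∑ k ∈ Finset.range (pathLen (0,0) w + 1), M :=
        Finset.sum_le_sum fun k _ => (abs_le.1 (hX _)).2
    _ = (pathLen (0,0) w + 1 : ℕ) * M := by simp

lemma lppSet_bddAbove {X : ℕ × ℕ → ℝ} {M : ℝ} (hX : ∀ z, |X z| ≤ M) (w : ℕ × ℕ) :
    BddAbove (lppSet X w) :=
  ⟨(pathLen (0,0) w + 1 : ℕ) * M, fun _ hs => mem_lppSet_le hX hs⟩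

lemma blockWeight_abs_le {X : ℕ × ℕ → ℝ} {M : ℝ} (hX : ∀ z, |X z| ≤ M) (r : ℕ) (z : ℕ × ℕ) :
    |blockWeight r X z| ≤ (r : ℕ) * M := by
  calc |blockWeight r X z| ≤ ∑ k ∈ Finset.range r, |X (z.1, r * z.2 + k)| :=
        Finset.abs_sum_le_sum_abs _ _
    _ ≤ ∑ k ∈ Finset.range r, M := Finset.sum_le_sum fun k _ => hX _
    _ = (r : ℕ) * M := by simp

/-- The key counting lemma: if the fine path cells inject into the block cells (pairs
`(j,h)`) with matching weights, the two path sums differ by at most `(a+1)(r-1)M`. -/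
lemma sum_compare {X : ℕ × ℕ → ℝ} {M : ℝ} (hX : ∀ z, |X z| ≤ M)
    {r a n : ℕ} (hr : 1 ≤ r) {p q : ℕ → ℕ × ℕ} {φ : ℕ → ℕ × ℕ}
    (hφmem : ∀ k ∈ Finset.range (a + r*n + 1), φ k ∈ Finset.range (a+n+1) ×ˢ Finset.range r)
    (hφinj : Set.InjOn φ (Finset.range (a + r*n + 1)))
    (hφval : ∀ k ∈ Finset.range (a + r*n + 1),
      X (q k) = X ((p (φ k).1).1, r * (p (φ k).1).2 + (φ k).2)) :
    |(∑ j ∈ Finset.range (a+n+1), blockWeight r X (p j)) -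
      ∑ k ∈ Finset.range (a + r*n + 1), X (q k)| ≤ ((a+1)*(r-1) : ℕ) * M := by
  classical
  set W : ℕ × ℕ → ℝ := fun jh => X ((p jh.1).1, r * (p jh.1).2 + jh.2) with hW
  set T : Finset (ℕ × ℕ) := Finset.range (a+n+1) ×ˢ Finset.range r with hT
  set S : Finset (ℕ × ℕ) := (Finset.range (a + r*n + 1)).image φ with hS
  have hSsub : S ⊆ T := by
    intro x hx
    obtain ⟨k, hk, rfl⟩ := Finset.mem_image.1 hx
    exact hφmem k hk
  have hsum1 : ∑ j ∈ Finset.range (a+n+1), blockWeight r X (p j) = ∑ x ∈ T, W x := by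
    rw [hT, Finset.sum_product]
    rfl
  have hsum2 : ∑ x ∈ S, W x = ∑ k ∈ Finset.range (a + r*n + 1), X (q k) := by
    rw [hS, Finset.sum_image (fun x hx y hy h => hφinj (by exact_mod_cast hx) (by exact_mod_cast hy) h)]
    exact Finset.sum_congr rfl fun k hk => (hφval k hk).symm
  have hsplit : ∑ x ∈ T, W x = (∑ x ∈ T \ S, W x) + ∑ x ∈ S, W x :=
    (Finset.sum_sdiff hSsub).symm
  have hcard : (T \ S).card = (a+1)*(r-1) := by
    have h1 : (T \ S).card + S.card = T.card := Finset.card_sdiff_add_card_eq_card hSsub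
    have h2 : S.card = a + r*n + 1 := by
      rw [hS, Finset.card_image_of_injOn (by exact_mod_cast hφinj)]
      simp
    have h3 : T.card = (a+n+1)*r := by simp [hT]
    obtain ⟨t, rfl⟩ : ∃ t, r = t + 1 := ⟨r - 1, by omega⟩
    have h4 : (T \ S).card + (a + (t+1)*n + 1) = (a+n+1)*(t+1) := by rw [← h2, h1, h3]
    have h5 : ((T \ S).card : ℤ) = (a+1)*((t+1)-1) := by
      have h6 : ((T \ S).card : ℤ) + (a + (t+1)*n + 1) = (a+n+1)*(t+1) := by exact_mod_cast h4
      push_cast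
      linear_combination h6
    exact_mod_cast h5
  have hbound : |∑ x ∈ T \ S, W x| ≤ ((a+1)*(r-1) : ℕ) * M := by
    calc |∑ x ∈ T \ S, W x| ≤ ∑ x ∈ T \ S, |W x| := Finset.abs_sum_le_sum_abs _ _
      _ ≤ ∑ x ∈ T \ S, M := Finset.sum_le_sum fun x _ => hX _
      _ = ((T \ S).card : ℕ) * M := by rw [Finset.sum_const, nsmul_eq_mul]
      _ = ((a+1)*(r-1) : ℕ) * M := by rw [hcard]
  calc |(∑ j ∈ Finset.range (a+n+1), blockWeight r X (p j)) -
      ∑ k ∈ Finset.range (a + r*n + 1), X (q k)|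
      = |∑ x ∈ T \ S, W x| := by rw [hsum1, ← hsum2, hsplit]; ring_nf
    _ ≤ ((a+1)*(r-1) : ℕ) * M := hbound


/-- Direction A: from a coarse path construct a fine path visiting each block bottom-up. -/
lemma fine_of_coarse {r a n : ℕ} (hr : 1 ≤ r) {p : ℕ → ℕ × ℕ}
    (hp : IsUpRightPath (0,0) (a,n) p) :
    ∃ (q : ℕ → ℕ × ℕ) (φ : ℕ → ℕ × ℕ), IsUpRightPath (0,0) (a, r*n) q ∧
      (∀ k ∈ Finset.range (a + r*n + 1), φ k ∈ Finset.range (a+n+1) ×ˢ Finset.range r) ∧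
      Set.InjOn φ (Finset.range (a + r*n + 1)) ∧
      (∀ k ∈ Finset.range (a + r*n + 1),
        q k = ((p (φ k).1).1, r * (p (φ k).1).2 + (φ k).2)) := by
  classical
  have hL : pathLen (0,0) (a,n) = a + n := pathLen_zero _
  have hL' : pathLen (0,0) (a, r*n) = a + r*n := pathLen_zero _
  have hcs : ∀ j ≤ a + n, (p j).1 + (p j).2 = j := by
    intro j hj; exact coord_sum hp j (by rw [hL]; exact hj)
  set τ : ℕ → ℕ := fun j => (p j).1 + r * (p j).2 with hτdef
  have hτ0 : τ 0 = 0 := by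
    simp only [hτdef]; rw [hp.1]; simp
  have hτend : τ (a+n) = a + r*n := by
    have h := hp.2.1; rw [hL] at h; simp only [hτdef]; rw [h]
  have hτstep : ∀ j < a + n, τ (j+1) = τ j + 1 ∨ τ (j+1) = τ j + r := by
    intro j hj
    rcases hp.2.2 j (by rw [hL]; exact hj) with h | h <;>
      simp only [hτdef] <;> rw [h] <;> [left; right] <;> simp [Nat.mul_succ] <;> ring
  have hτmono : ∀ j' ≤ a + n, ∀ j ≤ j', τ j + (j' - j) ≤ τ j' := by
    intro j'
    induction j' with
    | zero => intro _ j hj; interval_cases j; simp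
    | succ j' ih =>
      intro hj' j hj
      rcases Nat.lt_or_ge j (j'+1) with h | h
      · have h1 := ih (by omega) j (by omega)
        rcases hτstep j' (by omega) with h2 | h2 <;> omega
      · have : j = j' + 1 := by omega
        subst this; simp
  set J : ℕ → ℕ := fun k => Nat.findGreatest (fun j => τ j ≤ k) (a+n) with hJdef
  have hJle : ∀ k, J k ≤ a + n := fun k => Nat.findGreatest_le _
  have hτJ : ∀ k, τ (J k) ≤ k := by
    intro k
    exact Nat.findGreatest_spec (P := fun j => τ j ≤ k) (Nat.zero_le _)
      (by show τ 0 ≤ k; rw [hτ0]; exact Nat.zero_le k)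
  have hmax : ∀ k j', J k < j' → j' ≤ a + n → k < τ j' := by
    intro k j' h1 h2
    exact lt_of_not_ge (Nat.findGreatest_is_greatest (P := fun j => τ j ≤ k) h1 h2)
  set φ : ℕ → ℕ × ℕ := fun k => (J k, k - τ (J k)) with hφdef
  set q : ℕ → ℕ × ℕ := fun k => ((p (J k)).1, r * (p (J k)).2 + (k - τ (J k))) with hqdef
  have hqe : ∀ m, q m = ((p (φ m).1).1, r * (p (φ m).1).2 + (φ m).2) := fun m => rfl
  have hoff : ∀ k ≤ a + r*n, k - τ (J k) < r := by
    intro k hk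
    rcases Nat.eq_or_lt_of_le (hJle k) with h | h
    · have : τ (J k) = a + r*n := by rw [h, hτend]
      omega
    · have h1 : k < τ (J k + 1) := hmax k (J k + 1) (Nat.lt_succ_self _) h
      have h2 : τ (J k + 1) ≤ τ (J k) + r := by
        rcases hτstep (J k) h with h3 | h3 <;> omega
      omega
  -- q is a path
  have hq0 : q 0 = (0,0) := by
    have h1 : τ (J 0) ≤ 0 := hτJ 0
    have h2 : J 0 = 0 := by
      by_contra h
      have h3 := hτmono (J 0) (hJle 0) 0 (Nat.zero_le _)
      rw [hτ0] at h3
      omega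
    simp only [hqdef, h2, hp.1]
    simp [hτ0]
  have hqend : q (a + r*n) = (a, r*n) := by
    have h1 : a + n ≤ J (a + r*n) :=
      Nat.le_findGreatest le_rfl (by rw [hτend])
    have h2 : J (a + r*n) = a + n := le_antisymm (hJle _) h1
    have h3 := hp.2.1; rw [hL] at h3
    simp only [hqdef, h2, h3, hτend]
    simp
  have hJlt : ∀ k < a + r*n, J k < a + n := by
    intro k hk
    rcases Nat.eq_or_lt_of_le (hJle k) with h | h
    · have := hτJ k; rw [h, hτend] at this; omega
    · exact h
  have hqstep : ∀ k < a + r*n,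
      q (k+1) = ((q k).1 + 1, (q k).2) ∨ q (k+1) = ((q k).1, (q k).2 + 1) := by
    intro k hk
    have hJk : J k < a + n := hJlt k hk
    have h1 : k < τ (J k + 1) := hmax k (J k + 1) (Nat.lt_succ_self _) hJk
    have hττ : τ (J k) ≤ k := hτJ k
    rcases Nat.lt_or_ge (k+1) (τ (J k + 1)) with hc | hc
    · -- stay in same block, up step
      have hJ' : J (k+1) = J k := by
        refine le_antisymm ?_ (Nat.le_findGreatest (hJle k) (le_trans (hτJ k) (Nat.le_succ k)))
        by_contra h
        push_neg at h
        have h2 : τ (J (k+1)) ≤ k + 1 := hτJ (k+1)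
        have h3 := hτmono (J (k+1)) (hJle (k+1)) (J k + 1) h
        omega
      right
      simp only [hqdef, hJ', Prod.mk.injEq, true_and]
      omega
    · -- move to next block
      have hceq : τ (J k + 1) = k + 1 := by omega
      have hJ' : J (k+1) = J k + 1 := by
        refine le_antisymm ?_ (Nat.le_findGreatest hJk (le_of_eq hceq))
        by_contra h
        push_neg at h
        have h2 : τ (J (k+1)) ≤ k + 1 := hτJ (k+1)
        have h4 := hτmono (J (k+1)) (hJle (k+1)) (J k + 1) (by omega)
        omega
      have e1 : q (k+1) = ((p (J k + 1)).1, r * (p (J k + 1)).2) := by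
        simp only [hqdef, hJ', hceq]
        simp
      rcases hp.2.2 (J k) (by rw [hL]; exact hJk) with hstep | hstep
      · -- coarse right step
        left
        have hτ1 : τ (J k + 1) = τ (J k) + 1 := by
          simp only [hτdef]; rw [hstep]; simp; try omega
        have hkτ : k = τ (J k) := by omega
        rw [e1, hstep]
        simp only [hqdef, Prod.mk.injEq]
        refine ⟨trivial, by omega⟩
      · -- coarse up step
        right
        have hτ1 : τ (J k + 1) = τ (J k) + r := by
          simp only [hτdef]; rw [hstep]; simp [Nat.mul_succ]; try omega
        have hkτ : k - τ (J k) = r - 1 := by omega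
        rw [e1, hstep]
        simp only [hqdef, Prod.mk.injEq]
        refine ⟨trivial, by simp only [Nat.mul_succ]; omega⟩
  have hqpath : IsUpRightPath (0,0) (a, r*n) q := by
    refine ⟨hq0, ?_, ?_⟩
    · rw [hL']; exact hqend
    · rw [hL']; exact hqstep
  refine ⟨q, φ, hqpath, ?_, ?_, ?_⟩
  · intro k hk
    rw [Finset.mem_range] at hk
    rw [Finset.mem_product]
    constructor
    · rw [Finset.mem_range]; exact Nat.lt_succ_of_le (hJle k)
    · rw [Finset.mem_range]; exact hoff k (by omega)
  · intro k hk k' hk' h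
    simp only [Finset.coe_range, Set.mem_Iio] at hk hk'
    have hqk : q k = q k' := by rw [hqe k, hqe k', h]
    have c1 := coord_sum hqpath k (by rw [hL']; omega)
    have c2 := coord_sum hqpath k' (by rw [hL']; omega)
    rw [hqk] at c1
    omega
  · intro k _
    rfl

/-- Direction B: from a fine path construct the coarse path of blocks it visits. -/
lemma coarse_of_fine {r a n : ℕ} (hr : 1 ≤ r) {q : ℕ → ℕ × ℕ}
    (hq : IsUpRightPath (0,0) (a, r*n) q) :
    ∃ (p : ℕ → ℕ × ℕ) (φ : ℕ → ℕ × ℕ), IsUpRightPath (0,0) (a, n) p ∧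
      (∀ k ∈ Finset.range (a + r*n + 1), φ k ∈ Finset.range (a+n+1) ×ˢ Finset.range r) ∧
      Set.InjOn φ (Finset.range (a + r*n + 1)) ∧
      (∀ k ∈ Finset.range (a + r*n + 1),
        q k = ((p (φ k).1).1, r * (p (φ k).1).2 + (φ k).2)) := by
  classical
  have hr0 : 0 < r := hr
  set L := a + r*n with hLdef
  have hL' : pathLen (0,0) (a, r*n) = L := pathLen_zero _
  have hLcs : ∀ k ≤ L, (q k).1 + (q k).2 = k := by
    intro k hk; exact coord_sum hq k (by rw [hL']; exact hk)
  have hqmono : ∀ k k', k ≤ k' → k' ≤ L → (q k).1 ≤ (q k').1 ∧ (q k).2 ≤ (q k').2 := by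
    intro k k' h1 h2; exact path_mono hq k' (by rw [hL']; exact h2) k h1
  set s : ℕ → ℕ := fun k => (q k).1 + (q k).2 / r with hsdef
  set b : ℕ → ℕ × ℕ := fun k => ((q k).1, (q k).2 / r) with hbdef
  have hs0 : s 0 = 0 := by simp only [hsdef]; rw [hq.1]; simp
  have hqL : q L = (a, r*n) := by have := hq.2.1; rwa [hL'] at this
  have hbL : b L = (a, n) := by
    simp only [hbdef]; rw [hqL]; simp [Nat.mul_div_cancel_left n hr0]
  have hsL : s L = a + n := by
    simp only [hsdef]; rw [hqL]; simp [Nat.mul_div_cancel_left n hr0]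
  have hsstep : ∀ k < L, s k ≤ s (k+1) ∧ s (k+1) ≤ s k + 1 := by
    intro k hk
    rcases hq.2.2 k (by rw [hL']; exact hk) with h | h <;> simp only [hsdef] <;> rw [h]
    · simp; omega
    · simp only
      have h1 : (q k).2 / r ≤ ((q k).2 + 1) / r := Nat.div_le_div_right (Nat.le_succ _)
      have h2 : ((q k).2 + 1) / r ≤ (q k).2 / r + 1 := by
        have h3 : ((q k).2 + 1) / r ≤ ((q k).2 + r) / r := Nat.div_le_div_right (by omega)
        rwa [Nat.add_div_right _ hr0] at h3
      omega
  have hsmono : ∀ k k', k ≤ k' → k' ≤ L → s k ≤ s k' := by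
    intro k k' h1 h2
    have := hqmono k k' h1 h2
    have h3 : (q k).2 / r ≤ (q k').2 / r := Nat.div_le_div_right this.2
    simp only [hsdef]; omega
  -- constant blocks on s-levels
  have klev : ∀ k k', k ≤ k' → k' ≤ L → s k = s k' → b k = b k' := by
    intro k k' h1 h2 h3
    have h4 := hqmono k k' h1 h2
    have h5 : (q k).2 / r ≤ (q k').2 / r := Nat.div_le_div_right h4.2
    simp only [hsdef] at h3
    simp only [hbdef, Prod.mk.injEq]
    omega
  -- discrete intermediate value property
  have ivt : ∀ m ≤ L, ∀ j ≤ s m, ∃ k, k ≤ m ∧ s k = j := by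
    intro m
    induction m with
    | zero => intro _ j hj; rw [hs0] at hj; exact ⟨0, le_rfl, by omega⟩
    | succ m ih =>
      intro hm j hj
      rcases le_or_gt j (s m) with h | h
      · obtain ⟨k, hk1, hk2⟩ := ih (by omega) j h
        exact ⟨k, by omega, hk2⟩
      · have := hsstep m (by omega)
        exact ⟨m+1, le_rfl, by omega⟩
  set σ : ℕ → ℕ := fun j => if h : ∃ k, k ≤ L ∧ s k = j then Nat.find h else 0 with hσdef
  have hex : ∀ j ≤ a + n, ∃ k, k ≤ L ∧ s k = j := by
    intro j hj
    exact ivt L le_rfl j (by rw [hsL]; exact hj)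
  have hσspec : ∀ j ≤ a + n, σ j ≤ L ∧ s (σ j) = j := by
    intro j hj
    have h := hex j hj
    simp only [hσdef, dif_pos h]
    exact Nat.find_spec h
  have hσmin : ∀ j ≤ a + n, ∀ k < σ j, ¬(k ≤ L ∧ s k = j) := by
    intro j hj k hk
    have h := hex j hj
    simp only [hσdef, dif_pos h] at hk
    exact Nat.find_min h hk
  set p : ℕ → ℕ × ℕ := fun j => b (σ j) with hpdef
  have hbσ : ∀ k ≤ L, p (s k) = b k := by
    intro k hk
    have hsk : s k ≤ a + n := by rw [← hsL]; exact hsmono k L hk le_rfl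
    have h1 := hσspec (s k) hsk
    have h2 : σ (s k) ≤ k := by
      by_contra h
      push_neg at h
      exact hσmin (s k) hsk k h ⟨hk, rfl⟩
    exact klev (σ (s k)) k h2 hk h1.2
  have hLc : pathLen (0,0) (a, n) = a + n := pathLen_zero _
  have hppath : IsUpRightPath (0,0) (a, n) p := by
    refine ⟨?_, ?_, ?_⟩
    · have h1 := hσspec 0 (Nat.zero_le _)
      have h2 : (q (σ 0)).1 + (q (σ 0)).2 / r = 0 := h1.2
      obtain ⟨e1, e2⟩ := Nat.add_eq_zero.mp h2
      show ((q (σ 0)).1, (q (σ 0)).2 / r) = (0, 0)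
      rw [e1, e2]
    · rw [hLc]
      have h1 := hσspec (a+n) le_rfl
      have h2 : b (σ (a+n)) = b L := klev (σ (a+n)) L h1.1 le_rfl (by rw [h1.2, hsL])
      simp only [hpdef]
      rw [h2, hbL]
    · rw [hLc]
      intro j hj
      have h1 := hσspec (j+1) (by omega)
      set k1 := σ (j+1) with hk1def
      have hk11 : 1 ≤ k1 := by
        rcases Nat.eq_zero_or_pos k1 with h | h
        · exfalso; rw [h] at h1; rw [hs0] at h1; omega
        · exact h
      set k0 := k1 - 1 with hk0def
      have hk0L : k0 < L := by omega
      have hstep := hsstep k0 hk0L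
      have hk01 : k0 + 1 = k1 := by omega
      rw [hk01] at hstep
      have hsk0 : s k0 = j := by
        have h2 : ¬(k0 ≤ L ∧ s k0 = j + 1) := hσmin (j+1) (by omega) k0 (by omega)
        have h3 : s k0 ≠ j + 1 := fun h => h2 ⟨by omega, h⟩
        omega
      have hσj : σ j ≤ k0 := by
        by_contra h
        push_neg at h
        exact hσmin j (by omega) k0 h ⟨by omega, hsk0⟩
      have hbk0 : p j = b k0 := klev (σ j) k0 hσj (by omega) (by rw [(hσspec j (by omega)).2, hsk0])
      have hpj1 : p (j+1) = b k1 := rfl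
      rcases hq.2.2 k0 (by rw [hL']; exact hk0L) with h | h <;> rw [hk01] at h
      · left
        rw [hpj1, hbk0]
        simp only [hbdef]
        rw [h]
      · right
        rw [hpj1, hbk0]
        simp only [hbdef]
        rw [h]
        simp only [Prod.mk.injEq, true_and]
        have e1 : s k1 = j + 1 := h1.2
        have e2 : s k0 = j := hsk0
        simp only [hsdef] at e1 e2
        rw [h] at e1
        simp at e1
        omega
  set φ : ℕ → ℕ × ℕ := fun k => (s k, (q k).2 % r) with hφdef
  refine ⟨p, φ, hppath, ?_, ?_, ?_⟩
  · intro k hk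
    rw [Finset.mem_range] at hk
    rw [Finset.mem_product, Finset.mem_range, Finset.mem_range]
    simp only [hφdef]
    constructor
    · have : s k ≤ a + n := by rw [← hsL]; exact hsmono k L (by omega) le_rfl
      omega
    · exact Nat.mod_lt _ hr0
  · intro k hk k' hk' h
    simp only [Finset.coe_range, Set.mem_Iio] at hk hk'
    have h1 : s k = s k' := congrArg Prod.fst h
    have h2 : (q k).2 % r = (q k').2 % r := congrArg Prod.snd h
    have hqq : q k = q k' := by
      rcases le_total k k' with hle | hle
      · have h3 := klev k k' hle (by omega) h1
        simp only [hbdef, Prod.mk.injEq] at h3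
        have h4 := Nat.div_add_mod (q k).2 r
        have h5 := Nat.div_add_mod (q k').2 r
        rw [h3.2] at h4
        ext
        · exact h3.1
        · omega
      · have h3 := klev k' k hle (by omega) h1.symm
        simp only [hbdef, Prod.mk.injEq] at h3
        have h4 := Nat.div_add_mod (q k).2 r
        have h5 := Nat.div_add_mod (q k').2 r
        rw [h3.2] at h5
        ext
        · exact h3.1.symm
        · omega
    have c1 := hLcs k (by omega)
    have c2 := hLcs k' (by omega)
    rw [hqq] at c1
    omega
  · intro k hk
    rw [Finset.mem_range] at hk
    have h1 : p (s k) = b k := hbσ k (by omega)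
    show q k = ((p (φ k).1).1, r * (p (φ k).1).2 + (φ k).2)
    have hφk1 : (φ k).1 = s k := rfl
    have hφk2 : (φ k).2 = (q k).2 % r := rfl
    rw [hφk1, hφk2, h1]
    simp only [hbdef]
    ext
    · rfl
    · exact (Nat.div_add_mod (q k).2 r).symm

lemma lpp_compare {X : ℕ × ℕ → ℝ} {M : ℝ} (hX : ∀ z, |X z| ≤ M) {r : ℕ} (hr : 1 ≤ r)
    (a n : ℕ) :
    |LPP X (0,0) (a, r*n) - LPP (blockWeight r X) (0,0) (a, n)| ≤ ((a+1)*(r-1) : ℕ) * M := by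
  have hbddX := lppSet_bddAbove hX (a, r*n)
  have hbddB := lppSet_bddAbove (blockWeight_abs_le hX r) (a, n)
  have hLf : pathLen (0,0) ((a : ℕ), r*n) = a + r*n := pathLen_zero _
  have hLc : pathLen (0,0) ((a : ℕ), n) = a + n := pathLen_zero _
  rw [LPP_eq, LPP_eq, abs_sub_le_iff]
  constructor
  · -- fine ≤ coarse + c
    rw [sub_le_iff_le_add]
    refine csSup_le (lppSet_nonempty _ _) ?_
    rintro s ⟨q, hq, rfl⟩
    simp only [hLf] at hq ⊢
    obtain ⟨p, φ, hp, hmem, hinj, hval⟩ := coarse_of_fine hr hq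
    have hcmp := sum_compare (p := p) (q := q) hX hr hmem hinj
      (fun k hk => by rw [hval k hk])
    have hmemB : (∑ j ∈ Finset.range (a+n+1), blockWeight r X (p j)) ∈
        lppSet (blockWeight r X) (a, n) := ⟨p, hp, by rw [hLc]⟩
    have h1 : (∑ j ∈ Finset.range (a+n+1), blockWeight r X (p j)) ≤
        sSup (lppSet (blockWeight r X) (a, n)) := le_csSup hbddB hmemB
    have h2 := abs_sub_le_iff.1 hcmp
    linarith [h2.2]
  · -- coarse ≤ fine + c
    rw [sub_le_iff_le_add]
    refine csSup_le (lppSet_nonempty _ _) ?_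
    rintro s ⟨p, hp, rfl⟩
    simp only [hLc] at hp ⊢
    obtain ⟨q, φ, hqp, hmem, hinj, hval⟩ := fine_of_coarse hr hp
    have hcmp := sum_compare (p := p) (q := q) hX hr hmem hinj
      (fun k hk => by rw [hval k hk])
    have hmemX : (∑ k ∈ Finset.range (a + r*n + 1), X (q k)) ∈
        lppSet X (a, r*n) := ⟨q, hqp, by rw [hLf]⟩
    have h1 : (∑ k ∈ Finset.range (a + r*n + 1), X (q k)) ≤
        sSup (lppSet X (a, r*n)) := le_csSup hbddX hmemX
    have h2 := abs_sub_le_iff.1 hcmp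
    linarith [h2.1]

lemma key_bound {X : ℕ × ℕ → ℝ} {M : ℝ} (hM : 0 ≤ M) (hX : ∀ z, |X z| ≤ M)
    {r : ℕ} (hr : 1 ≤ r) {α : ℝ} (hα : 0 < α) {A B : ℝ}
    (hA : Tendsto (fun n : ℕ => LPP X (0,0) (⌊(n:ℝ) * α⌋₊, ⌊(n:ℝ) * 1⌋₊) / n) atTop (𝓝 A))
    (hB : Tendsto (fun n : ℕ =>
      LPP (blockWeight r X) (0,0) (⌊(n:ℝ) * (α * r)⌋₊, ⌊(n:ℝ) * 1⌋₊) / n) atTop (𝓝 B)) :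
    |A - (1/(r:ℝ)) * B| ≤ α * r * M := by
  have hr0 : (0:ℝ) < r := by exact_mod_cast hr
  set amap : ℕ → ℕ := fun n => ⌊(n:ℝ) * (α * r)⌋₊ with hamap
  -- the coarse-grained limit
  have hB' : Tendsto (fun n : ℕ =>
      LPP (blockWeight r X) (0,0) (amap n, n) / n) atTop (𝓝 B) := by
    refine hB.congr fun n => ?_
    simp [hamap]
  -- the fine limit along the subsequence r*n
  have hsub : Tendsto (fun n : ℕ => r * n) atTop atTop :=
    tendsto_atTop_atTop.2 fun b => ⟨b, fun n hn => le_trans hn (Nat.le_mul_of_pos_left n (by omega))⟩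
  have hA1 : Tendsto (fun n : ℕ =>
      LPP X (0,0) (⌊((r*n : ℕ):ℝ) * α⌋₊, ⌊((r*n : ℕ):ℝ) * 1⌋₊) / (r*n : ℕ)) atTop (𝓝 A) :=
    hA.comp hsub
  have hA2 : Tendsto (fun n : ℕ =>
      LPP X (0,0) (amap n, r*n) / ((r : ℝ) * n)) atTop (𝓝 A) := by
    refine hA1.congr fun n => ?_
    have e1 : ((r*n : ℕ):ℝ) * α = (n:ℝ) * (α * r) := by push_cast; ring
    have e2 : ⌊((r*n : ℕ):ℝ) * 1⌋₊ = r * n := by rw [mul_one, Nat.floor_natCast]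
    rw [e1, e2]
    push_cast
    rfl
  have hA3 : Tendsto (fun n : ℕ =>
      (LPP X (0,0) (amap n, r*n) / ((r:ℝ) * n)) * r) atTop (𝓝 (A * r)) :=
    hA2.mul_const _
  have hfg : Tendsto (fun n : ℕ =>
      |(LPP X (0,0) (amap n, r*n) / ((r:ℝ) * n)) * r -
        LPP (blockWeight r X) (0,0) (amap n, n) / n|) atTop (𝓝 |A * r - B|) :=
    (hA3.sub hB').abs
  have hc : Tendsto (fun n : ℕ => (α * r * r * M) + ((r:ℝ) * M) / n) atTop
      (𝓝 (α * r * r * M)) := by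
    have := tendsto_const_nhds (x := α * r * r * M) (f := atTop (α := ℕ))
    have h2 : Tendsto (fun n : ℕ => ((r:ℝ) * M) / n) atTop (𝓝 0) :=
      tendsto_const_div_atTop_nhds_zero_nat _
    simpa using this.add h2
  have hle : ∀ n : ℕ, 1 ≤ n →
      |(LPP X (0,0) (amap n, r*n) / ((r:ℝ) * n)) * r -
        LPP (blockWeight r X) (0,0) (amap n, n) / n| ≤
      (α * r * r * M) + ((r:ℝ) * M) / n := by
    intro n hn
    have hn0 : (0:ℝ) < n := by exact_mod_cast hn
    have e1 : (LPP X (0,0) (amap n, r*n) / ((r:ℝ) * n)) * r =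
        LPP X (0,0) (amap n, r*n) / n := by
      field_simp
    rw [e1, div_sub_div_same, abs_div, abs_of_pos hn0, div_le_iff₀ hn0]
    have h2 := lpp_compare hX hr (amap n) n
    have h3 : ((amap n + 1) * (r-1) : ℕ) * M ≤ ((n:ℝ) * (α * r) + 1) * r * M := by
      have h4 : ((amap n : ℝ)) ≤ (n:ℝ) * (α * r) :=
        Nat.floor_le (by positivity)
      have h5 : (((r:ℕ) - 1 : ℕ) : ℝ) ≤ (r:ℝ) := by
        have : ((r:ℕ) - 1 : ℕ) ≤ r := Nat.sub_le _ _
        exact_mod_cast this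
      have h6 : (((amap n + 1) * (r-1) : ℕ) : ℝ) ≤ ((n:ℝ) * (α * r) + 1) * r := by
        push_cast
        have h7 : (0:ℝ) ≤ (amap n : ℝ) + 1 := by positivity
        calc ((amap n : ℝ) + 1) * (((r:ℕ) - 1 : ℕ) : ℝ) ≤ ((amap n : ℝ) + 1) * r :=
              mul_le_mul_of_nonneg_left h5 h7
          _ ≤ ((n:ℝ) * (α * r) + 1) * r := by nlinarith
      exact mul_le_mul_of_nonneg_right h6 hM
    calc |LPP X (0,0) (amap n, r*n) - LPP (blockWeight r X) (0,0) (amap n, n)|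
        ≤ ((amap n + 1) * (r-1) : ℕ) * M := h2
      _ ≤ ((n:ℝ) * (α * r) + 1) * r * M := h3
      _ = ((α * r * r * M) + ((r:ℝ) * M) / n) * n := by field_simp
  have hABr : |A * r - B| ≤ α * r * r * M :=
    le_of_tendsto_of_tendsto hfg hc (Filter.eventually_atTop.2 ⟨1, hle⟩)
  have e : A - (1/(r:ℝ)) * B = (A * r - B) / r := by
    field_simp
  rw [e, abs_div, abs_of_pos hr0, div_le_iff₀ hr0]
  calc |A * (r:ℝ) - B| ≤ α * r * r * M := hABr
    _ = α * r * M * r := by ring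

lemma ae_bdd {Ω : Type} (𝒢 : MeasurableSpace Ω) [mΩ : MeasurableSpace Ω]
    (P : Measure Ω) [IsProbabilityMeasure P]
    (F : ℕ → Ω → Measure ℝ) (X : ℕ × ℕ → Ω → ℝ) (hXmeas : ∀ z, Measurable (X z))
    (h𝒢 : 𝒢 ≤ mΩ)
    (hCD : ∀ z : ℕ × ℕ, ∀ s : Set ℝ, MeasurableSet s →
      (P[(X z ⁻¹' s).indicator (fun _ => (1 : ℝ)) | 𝒢])
        =ᵐ[P] fun ω => ((F z.2 ω) s).toReal)
    (M : ℝ) (hMbd : ∀ j, ∀ᵐ ω ∂P,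
      (F j ω) (Set.Iic (-M)) = 0 ∧ (F j ω) (Set.Iic M) = 1) :
    ∀ᵐ ω ∂P, ∀ z : ℕ × ℕ, |X z ω| ≤ M := by
  rw [MeasureTheory.ae_all_iff]
  intro z
  have key : ∀ s : Set ℝ, MeasurableSet s → ∀ c : ℝ,
      ((fun ω => ((F z.2 ω) s).toReal) =ᵐ[P] fun _ => c) → (P (X z ⁻¹' s)).toReal = c := by
    intro s hs c hc
    have hA : MeasurableSet (X z ⁻¹' s) := (hXmeas z) hs
    have hInt : Integrable ((X z ⁻¹' s).indicator (fun _ => (1:ℝ))) P :=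
      (integrable_const 1).indicator hA
    have h1 : ∫ ω, (P[(X z ⁻¹' s).indicator (fun _ => (1:ℝ)) | 𝒢]) ω ∂P
        = ∫ ω, (X z ⁻¹' s).indicator (fun _ => (1:ℝ)) ω ∂P := integral_condExp h𝒢
    have h2 : ∫ ω, (P[(X z ⁻¹' s).indicator (fun _ => (1:ℝ)) | 𝒢]) ω ∂P
        = ∫ ω, (fun _ : Ω => c) ω ∂P := integral_congr_ae ((hCD z s hs).trans hc)
    have h3 : ∫ ω, (X z ⁻¹' s).indicator (fun _ => (1:ℝ)) ω ∂P
        = (P (X z ⁻¹' s)).toReal := by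
      rw [integral_indicator_const _ hA]; simp; rfl
    have h4 : ∫ ω, (fun _ : Ω => c) ω ∂P = c := by simp
    rw [← h3, ← h1, h2, h4]
  have hup : (P (X z ⁻¹' Set.Iic M)).toReal = 1 :=
    key _ measurableSet_Iic 1 ((hMbd z.2).mono fun ω h => by simp [h.2])
  have hdn : (P (X z ⁻¹' Set.Iic (-M))).toReal = 0 :=
    key _ measurableSet_Iic 0 ((hMbd z.2).mono fun ω h => by simp [h.1])
  have hup' : P (X z ⁻¹' Set.Iic M) = 1 :=
    (ENNReal.toReal_eq_one_iff _).mp hup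
  have hdn' : P (X z ⁻¹' Set.Iic (-M)) = 0 := by
    have hne : P (X z ⁻¹' Set.Iic (-M)) ≠ ⊤ := measure_ne_top P _
    rcases (ENNReal.toReal_eq_zero_iff _).mp hdn with h | h
    · exact h
    · exact absurd h hne
  have e1 : ∀ᵐ ω ∂P, X z ω ≤ M := by
    have hA : MeasurableSet (X z ⁻¹' Set.Iic M) := (hXmeas z) measurableSet_Iic
    have := (prob_compl_eq_zero_iff hA).mpr hup'
    rw [ae_iff]
    exact this
  have e2 : ∀ᵐ ω ∂P, ¬ (X z ω ≤ -M) := by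
    rw [ae_iff]
    simp only [not_not]; exact hdn'
  filter_upwards [e1, e2] with ω l1 l2
  rw [abs_le]
  constructor
  · push_neg at l2; linarith
  · exact l1

end CG

theorem coarse_graining_lemma
    {Ω : Type} (𝒢 : MeasurableSpace Ω) [mΩ : MeasurableSpace Ω] [StandardBorelSpace Ω]
    (P : Measure Ω) [IsProbabilityMeasure P]
    (F : ℕ → Ω → Measure ℝ)
    (hFprob : ∀ j ω, IsProbabilityMeasure (F j ω))
    (hFmeas : ∀ j, Measurable (F j))
    (X : ℕ × ℕ → Ω → ℝ)
    (hXmeas : ∀ z, Measurable (X z))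
    (h𝒢 : 𝒢 ≤ mΩ)
    (hF𝒢 : ∀ j, Measurable[𝒢] (F j))
    (hCI : iCondIndepFun 𝒢 h𝒢 X P)
    (hCD : ∀ z : ℕ × ℕ, ∀ s : Set ℝ, MeasurableSet s →
      (P[(X z ⁻¹' s).indicator (fun _ => (1 : ℝ)) | 𝒢])
        =ᵐ[P] fun ω => ((F z.2 ω) s).toReal)
    -- the environment process is stationary and ergodic
    (hErg : Ergodic (fun f : ℕ → Measure ℝ => fun n => f (n + 1))
      (Measure.map (fun ω => fun j => F j ω) P))
    -- (M-bd): uniformly bounded weights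
    (M : ℝ) (hMbd : ∀ j, ∀ᵐ ω ∂P,
      (F j ω) (Set.Iic (-M)) = 0 ∧ (F j ω) (Set.Iic M) = 1)
    -- Ψ_F is the time constant of the original model
    (ΨF : ℝ → ℝ → ℝ)
    (hΨF : ∀ x y : ℝ, 0 < x → 0 < y →
      ∀ᵐ ω ∂P, Tendsto (fun n : ℕ =>
          LPP (fun z => X z ω) (0, 0) (⌊(n : ℝ) * x⌋₊, ⌊(n : ℝ) * y⌋₊) / n)
        atTop (nhds (ΨF x y)))
    -- Ψ_{F_r} is the time constant of the coarse-grained model with row distributions F_{r,j}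
    (ΨFr : ℕ → ℝ → ℝ → ℝ)
    (hΨFr : ∀ r : ℕ, 1 ≤ r → ∀ x y : ℝ, 0 < x → 0 < y →
      ∀ᵐ ω ∂P, Tendsto (fun n : ℕ =>
          LPP (blockWeight r (fun z => X z ω)) (0, 0) (⌊(n : ℝ) * x⌋₊, ⌊(n : ℝ) * y⌋₊) / n)
        atTop (nhds (ΨFr r x y)))
    -- r = r(α) is a positive-integer-valued function with r → ∞ and r√α → 0 as α ↓ 0
    (r : ℝ → ℕ) (hr1 : ∀ α, 1 ≤ r α)
    (hr2 : Tendsto r (𝓝[>] 0) atTop)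
    (hr3 : Tendsto (fun α : ℝ => (r α : ℝ) * Real.sqrt α) (𝓝[>] 0) (𝓝 0)) :
    Tendsto (fun α : ℝ =>
        |ΨF α 1 - (1 / (r α : ℝ)) * ΨFr (r α) (α * (r α : ℝ)) 1| / Real.sqrt α)
      (𝓝[>] 0) (𝓝 0) := by
  classical
  haveI : (MeasureTheory.ae P).NeBot := MeasureTheory.ae_neBot.2 (IsProbabilityMeasure.ne_zero P)
  -- M is nonnegative
  have hM : 0 ≤ M := by
    obtain ⟨ω, h0, h1⟩ := (hMbd 0).exists
    by_contra h
    push_neg at h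
    have hsub : Set.Iic M ⊆ Set.Iic (-M) := Set.Iic_subset_Iic.2 (by linarith)
    have h2 : (F 0 ω) (Set.Iic M) ≤ (F 0 ω) (Set.Iic (-M)) := measure_mono hsub
    rw [h0, h1] at h2
    simp at h2
  have hbdd : ∀ᵐ ω ∂P, ∀ z : ℕ × ℕ, |X z ω| ≤ M := CG.ae_bdd 𝒢 P F X hXmeas h𝒢 hCD M hMbd
  -- the key deterministic bound on the difference of time constants
  have hineq : ∀ α : ℝ, 0 < α →
      |ΨF α 1 - (1 / (r α : ℝ)) * ΨFr (r α) (α * (r α : ℝ)) 1| ≤ α * (r α : ℝ) * M := by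
    intro α hα
    have hrα := hr1 α
    have hrpos : (0:ℝ) < (r α : ℝ) := by exact_mod_cast hrα
    have h1 := hΨF α 1 hα one_pos
    have h2 := hΨFr (r α) hrα (α * (r α : ℝ)) 1 (mul_pos hα hrpos) one_pos
    obtain ⟨ω, hbω, h1ω, h2ω⟩ := (hbdd.and (h1.and h2)).exists
    exact CG.key_bound hM hbω hrα hα h1ω h2ω
  -- squeeze
  have hbound : Tendsto (fun α : ℝ => ((r α : ℝ) * Real.sqrt α) * M) (𝓝[>] 0) (𝓝 0) := by
    simpa using hr3.mul_const M
  refine squeeze_zero' ?_ ?_ hbound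
  · filter_upwards [self_mem_nhdsWithin] with α hα
    exact div_nonneg (abs_nonneg _) (Real.sqrt_nonneg _)
  · filter_upwards [self_mem_nhdsWithin] with α hα
    have hα' : 0 < α := hα
    have hs : 0 < Real.sqrt α := Real.sqrt_pos.2 hα'
    have h := hineq α hα'
    have e : α * (r α : ℝ) * M / Real.sqrt α = ((r α : ℝ) * Real.sqrt α) * M := by
      rw [div_eq_iff hs.ne']
      linear_combination (-(r α : ℝ) * M) * Real.mul_self_sqrt hα'.le
    calc |ΨF α 1 - (1 / (r α : ℝ)) * ΨFr (r α) (α * (r α : ℝ)) 1| / Real.sqrt α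
        ≤ (α * (r α : ℝ) * M) / Real.sqrt α := by gcongr
      _ = ((r α : ℝ) * Real.sqrt α) * M := e

end
end

section
/- Let (Ω, ℱ, P) be a probability space, 𝒟 a sub-σ-field of ℱ, D an event in 𝒟, and ξ and η two integrable real random variables. Assume that E η = 0, that η is independent of 𝒟, and that ξ and η are conditionally independent given 𝒟. Then E[ ξ ∨ (η · 1_D) ] ≤ E[ ξ ∨ η ], where ∨ denotes the pointwise maximum and 1_D the indicator function of D. -/
open MeasureTheory ProbabilityTheory Set

theorem convexity_max_lemma
    {Ω : Type} (𝒟 : MeasurableSpace Ω) [mΩ : MeasurableSpace Ω] [StandardBorelSpace Ω]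
    (P : Measure Ω) [IsProbabilityMeasure P]
    (h𝒟 : 𝒟 ≤ mΩ)
    (D : Set Ω) (hD : MeasurableSet[𝒟] D)
    (ξ η : Ω → ℝ)
    (hξmeas : Measurable ξ) (hηmeas : Measurable η)
    (hξint : Integrable ξ P) (hηint : Integrable η P)
    -- E η = 0
    (hmean : ∫ ω, η ω ∂P = 0)
    -- η is independent of 𝒟
    (hind : ProbabilityTheory.Indep (MeasurableSpace.comap η inferInstance) 𝒟 P)
    -- ξ and η are conditionally independent given 𝒟
    (hci : ProbabilityTheory.CondIndepFun 𝒟 h𝒟 ξ η P) :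
    ∫ ω, max (ξ ω) (D.indicator η ω) ∂P ≤ ∫ ω, max (ξ ω) (η ω) ∂P := by
  classical
  have hDm : MeasurableSet D := h𝒟 D hD
  -- conditional expectation of indicator of η-preimages is constant
  have hcondη : ∀ t : Set ℝ, MeasurableSet t →
      (P⟦η ⁻¹' t | 𝒟⟧) =ᵐ[P] fun _ => (P (η ⁻¹' t)).toReal := by
    intro t ht
    have hpre : MeasurableSet[MeasurableSpace.comap η inferInstance] (η ⁻¹' t) :=
      ⟨t, ht, rfl⟩
    have hsm : StronglyMeasurable[MeasurableSpace.comap η inferInstance]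
        ((η ⁻¹' t).indicator (fun _ => (1:ℝ))) :=
      (Measurable.indicator measurable_const hpre).stronglyMeasurable
    have h := condExp_indep_eq hηmeas.comap_le h𝒟 hsm hind
    have hval : ∫ x, (η ⁻¹' t).indicator (fun _ => (1:ℝ)) x ∂P = (P (η ⁻¹' t)).toReal := by
      rw [integral_indicator (hηmeas ht), setIntegral_const, smul_eq_mul, mul_one, measureReal_def]
    refine h.trans ?_
    rw [hval]
  -- unfold conditional independence
  have hciexp := (condIndepFun_iff_condExp_inter_preimage_eq_mul
      (m' := 𝒟) (hm' := h𝒟) (μ := P) hξmeas hηmeas).mp hci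
  have hM_le : 𝒟 ⊔ MeasurableSpace.comap ξ inferInstance ≤ mΩ := sup_le h𝒟 hξmeas.comap_le
  -- Step 1 : η is independent of 𝒟 ⊔ σ(ξ)
  have hindep2 : Indep (MeasurableSpace.comap η inferInstance)
      (𝒟 ⊔ MeasurableSpace.comap ξ inferInstance) P := by
    set p1 : Set (Set Ω) := {S | ∃ t : Set ℝ, MeasurableSet t ∧ η ⁻¹' t = S} with hp1def
    set p2 : Set (Set Ω) := {S | ∃ B₁, MeasurableSet[𝒟] B₁ ∧
        ∃ s : Set ℝ, MeasurableSet s ∧ S = B₁ ∩ ξ ⁻¹' s} with hp2def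
    have hgen1 : MeasurableSpace.comap η inferInstance = MeasurableSpace.generateFrom p1 := by
      refine le_antisymm ?_ (MeasurableSpace.generateFrom_le ?_)
      · rintro S ⟨t, ht, rfl⟩
        exact MeasurableSpace.measurableSet_generateFrom ⟨t, ht, rfl⟩
      · rintro S ⟨t, ht, rfl⟩
        exact ⟨t, ht, rfl⟩
    have hgen2 : 𝒟 ⊔ MeasurableSpace.comap ξ inferInstance
        = MeasurableSpace.generateFrom p2 := by
      refine le_antisymm (sup_le ?_ ?_) (MeasurableSpace.generateFrom_le ?_)
      · intro S hS
        exact MeasurableSpace.measurableSet_generateFrom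
          ⟨S, hS, Set.univ, MeasurableSet.univ, by simp⟩
      · rintro S ⟨s, hs, rfl⟩
        exact MeasurableSpace.measurableSet_generateFrom
          ⟨Set.univ, MeasurableSet.univ, s, hs, by simp⟩
      · rintro S ⟨B₁, hB₁, s, hs, rfl⟩
        refine MeasurableSet.inter ?_ ?_
        · exact (le_sup_left : 𝒟 ≤ 𝒟 ⊔ MeasurableSpace.comap ξ inferInstance) _ hB₁
        · exact (le_sup_right :
            MeasurableSpace.comap ξ inferInstance ≤ 𝒟 ⊔ MeasurableSpace.comap ξ inferInstance)
            _ ⟨s, hs, rfl⟩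
    have hpi1 : IsPiSystem p1 := by
      rintro S ⟨t, ht, rfl⟩ S' ⟨t', ht', rfl⟩ _
      exact ⟨t ∩ t', ht.inter ht', by rw [Set.preimage_inter]⟩
    have hpi2 : IsPiSystem p2 := by
      rintro S ⟨B₁, hB₁, s, hs, rfl⟩ S' ⟨B₁', hB₁', s', hs', rfl⟩ _
      refine ⟨B₁ ∩ B₁', hB₁.inter hB₁', s ∩ s', hs.inter hs', ?_⟩
      rw [Set.preimage_inter]
      ext ω; simp; tauto
    have hsets : IndepSets p1 p2 P := by
      rw [IndepSets_iff]
      rintro S1 S2 ⟨t, ht, rfl⟩ ⟨B₁, hB₁, s, hs, rfl⟩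
      have hB₁m : MeasurableSet B₁ := h𝒟 _ hB₁
      have hindξ : Integrable ((ξ ⁻¹' s ∩ η ⁻¹' t).indicator (fun _ => (1:ℝ))) P :=
        (integrable_const 1).indicator ((hξmeas hs).inter (hηmeas ht))
      have hindξ' : Integrable ((ξ ⁻¹' s).indicator (fun _ => (1:ℝ))) P :=
        (integrable_const 1).indicator (hξmeas hs)
      have hreal : (P (η ⁻¹' t ∩ (B₁ ∩ ξ ⁻¹' s))).toReal
          = (P (η ⁻¹' t)).toReal * (P (B₁ ∩ ξ ⁻¹' s)).toReal := by
        have e1 : (P (η ⁻¹' t ∩ (B₁ ∩ ξ ⁻¹' s))).toReal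
            = ∫ ω in B₁, ((ξ ⁻¹' s ∩ η ⁻¹' t).indicator (fun _ => (1:ℝ))) ω ∂P := by
          rw [setIntegral_indicator ((hξmeas hs).inter (hηmeas ht)), setIntegral_const,
            smul_eq_mul, mul_one]
          have hset : B₁ ∩ (ξ ⁻¹' s ∩ η ⁻¹' t) = η ⁻¹' t ∩ (B₁ ∩ ξ ⁻¹' s) := by
            ext ω; simp only [Set.mem_inter_iff, Set.mem_preimage]; tauto
          rw [hset, measureReal_def]
        have e2 : ∫ ω in B₁, ((ξ ⁻¹' s ∩ η ⁻¹' t).indicator (fun _ => (1:ℝ))) ω ∂P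
            = ∫ ω in B₁, (P⟦ξ ⁻¹' s ∩ η ⁻¹' t | 𝒟⟧) ω ∂P :=
          (setIntegral_condExp h𝒟 hindξ hB₁).symm
        have e3 : ∫ ω in B₁, (P⟦ξ ⁻¹' s ∩ η ⁻¹' t | 𝒟⟧) ω ∂P
            = ∫ ω in B₁, (P⟦ξ ⁻¹' s | 𝒟⟧) ω * (P (η ⁻¹' t)).toReal ∂P := by
          refine setIntegral_congr_ae hB₁m ?_
          filter_upwards [hciexp s t hs ht, hcondη t ht] with ω h1 h2 _
          rw [h1, h2]
        have e4 : ∫ ω in B₁, (P⟦ξ ⁻¹' s | 𝒟⟧) ω * (P (η ⁻¹' t)).toReal ∂P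
            = (P (η ⁻¹' t)).toReal * ∫ ω in B₁, (P⟦ξ ⁻¹' s | 𝒟⟧) ω ∂P := by
          rw [integral_mul_const]
          exact mul_comm _ _
        have e5 : ∫ ω in B₁, (P⟦ξ ⁻¹' s | 𝒟⟧) ω ∂P
            = (P (B₁ ∩ ξ ⁻¹' s)).toReal := by
          rw [setIntegral_condExp h𝒟 hindξ' hB₁,
            setIntegral_indicator (hξmeas hs), setIntegral_const, smul_eq_mul, mul_one, measureReal_def]
        rw [e1, e2, e3, e4, e5]
      have hfin1 : P (η ⁻¹' t ∩ (B₁ ∩ ξ ⁻¹' s)) ≠ ⊤ := measure_ne_top _ _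
      have hfin2 : P (η ⁻¹' t) * P (B₁ ∩ ξ ⁻¹' s) ≠ ⊤ :=
        ENNReal.mul_ne_top (measure_ne_top _ _) (measure_ne_top _ _)
      rw [← ENNReal.toReal_eq_toReal_iff' hfin1 hfin2, hreal, ENNReal.toReal_mul]
    exact IndepSets.indep hηmeas.comap_le hM_le hpi1 hpi2 hgen1 hgen2 hsets
  -- Step 2 : η independent of Z = (ξ, 1_{Dᶜ})
  set Z : Ω → ℝ × ℝ := fun ω => (ξ ω, Dᶜ.indicator (fun _ => (1:ℝ)) ω) with hZdef
  have hξM : Measurable[𝒟 ⊔ MeasurableSpace.comap ξ inferInstance] ξ :=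
    fun t ht => (le_sup_right :
      MeasurableSpace.comap ξ inferInstance ≤ 𝒟 ⊔ MeasurableSpace.comap ξ inferInstance)
      _ ⟨t, ht, rfl⟩
  have hZmeasM : Measurable[𝒟 ⊔ MeasurableSpace.comap ξ inferInstance] Z :=
    Measurable.prodMk hξM
      ((Measurable.indicator measurable_const hD.compl).mono le_sup_left le_rfl)
  have hZmeas : Measurable Z := hZmeasM.mono hM_le le_rfl
  have hindfun : IndepFun η Z P :=
    indep_of_indep_of_le_right hindep2 hZmeasM.comap_le
  have hindfun' : IndepFun Z η P := hindfun.symm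
  have hmap : P.map (fun ω => (Z ω, η ω)) = (P.map Z).prod (P.map η) :=
    (indepFun_iff_map_prod_eq_prod_map_map hZmeas.aemeasurable hηmeas.aemeasurable).mp hindfun'
  set μZ : Measure (ℝ × ℝ) := P.map Z with hμZdef
  set μη : Measure ℝ := P.map η with hμηdef
  haveI : IsProbabilityMeasure μη := Measure.isProbabilityMeasure_map hηmeas.aemeasurable
  haveI : IsProbabilityMeasure μZ := Measure.isProbabilityMeasure_map hZmeas.aemeasurable
  set φ : (ℝ × ℝ) × ℝ → ℝ := fun q => q.1.2 * max q.1.1 q.2 with hφdef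
  set ψ : ℝ × ℝ → ℝ := fun p => p.2 * max p.1 0 with hψdef
  have hφmeas : Measurable φ :=
    (measurable_snd.comp measurable_fst).mul
      ((measurable_fst.comp measurable_fst).max measurable_snd)
  have hψmeas : Measurable ψ :=
    measurable_snd.mul (measurable_fst.max measurable_const)
  have hφcomp : ∀ ω, φ (Z ω, η ω) = Dᶜ.indicator (fun ω' => max (ξ ω') (η ω')) ω := by
    intro ω
    by_cases h : ω ∈ Dᶜ <;>
      simp [φ, Z, Set.indicator_of_mem, Set.indicator_of_notMem, h]
  have hψcomp : ∀ ω, ψ (Z ω) = Dᶜ.indicator (fun ω' => max (ξ ω') 0) ω := by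
    intro ω
    by_cases h : ω ∈ Dᶜ <;>
      simp [ψ, Z, Set.indicator_of_mem, Set.indicator_of_notMem, h]
  have hmaxint : Integrable (fun ω => max (ξ ω) (η ω)) P := hξint.sup hηint
  have hmax0int : Integrable (fun ω => max (ξ ω) 0) P := hξint.sup (integrable_const 0)
  have hint1 : Integrable (Dᶜ.indicator (fun ω' => max (ξ ω') (η ω'))) P :=
    hmaxint.indicator hDm.compl
  have hint0 : Integrable (Dᶜ.indicator (fun ω' => max (ξ ω') 0)) P :=
    hmax0int.indicator hDm.compl
  have hφint : Integrable φ (μZ.prod μη) := by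
    rw [hμZdef, hμηdef, ← hmap,
      integrable_map_measure hφmeas.aestronglyMeasurable
        (hZmeas.prodMk hηmeas).aemeasurable]
    exact hint1.congr (Filter.Eventually.of_forall fun ω => (hφcomp ω).symm)
  have hψint : Integrable ψ μZ := by
    rw [hμZdef, integrable_map_measure hψmeas.aestronglyMeasurable hZmeas.aemeasurable]
    exact hint0.congr (Filter.Eventually.of_forall fun ω => (hψcomp ω).symm)
  have hη_map_int : Integrable (fun y => y) μη :=
    (integrable_map_measure aestronglyMeasurable_id hηmeas.aemeasurable).mpr hηint
  have hη_mean : ∫ y, y ∂μη = 0 := by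
    have h : ∫ y, (fun y : ℝ => y) y ∂(P.map η) = ∫ ω, η ω ∂P :=
      integral_map hηmeas.aemeasurable aestronglyMeasurable_id
    rw [hμηdef]
    exact h.trans hmean
  have hinner : ∀ a : ℝ, max a 0 ≤ ∫ y, max a y ∂μη := by
    intro a
    have hint : Integrable (fun y => max a y) μη := (integrable_const a).sup hη_map_int
    refine max_le ?_ ?_
    · calc a = ∫ _, a ∂μη := by simp
        _ ≤ ∫ y, max a y ∂μη :=
          integral_mono (integrable_const a) hint fun y => le_max_left _ _
    · rw [← hη_mean]
      exact integral_mono hη_map_int hint fun y => le_max_right _ _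
  have hZ2nonneg : ∀ᵐ p ∂μZ, 0 ≤ p.2 := by
    rw [hμZdef, ae_map_iff hZmeas.aemeasurable
      (measurableSet_le measurable_const measurable_snd)]
    exact Filter.Eventually.of_forall fun ω =>
      Set.indicator_nonneg (fun _ _ => zero_le_one) ω
  have key : ∫ ω, Dᶜ.indicator (fun ω' => max (ξ ω') 0) ω ∂P
      ≤ ∫ ω, Dᶜ.indicator (fun ω' => max (ξ ω') (η ω')) ω ∂P := by
    have l0 : ∫ ω, Dᶜ.indicator (fun ω' => max (ξ ω') 0) ω ∂P = ∫ p, ψ p ∂μZ := by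
      rw [hμZdef, integral_map hZmeas.aemeasurable hψmeas.aestronglyMeasurable]
      exact integral_congr_ae (Filter.Eventually.of_forall fun ω => (hψcomp ω).symm)
    have l1 : ∫ ω, Dᶜ.indicator (fun ω' => max (ξ ω') (η ω')) ω ∂P
        = ∫ p, ∫ y, φ (p, y) ∂μη ∂μZ := by
      rw [← integral_prod φ hφint, hμZdef, hμηdef, ← hmap,
        integral_map (hZmeas.prodMk hηmeas).aemeasurable hφmeas.aestronglyMeasurable]
      exact integral_congr_ae (Filter.Eventually.of_forall fun ω => (hφcomp ω).symm)
    rw [l0, l1]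
    refine integral_mono_ae hψint hφint.integral_prod_left ?_
    filter_upwards [hZ2nonneg] with p hp
    have hmul : ∫ y, φ (p, y) ∂μη = p.2 * ∫ y, max p.1 y ∂μη := by
      simp only [φ]
      exact integral_const_mul p.2 _
    show ψ p ≤ ∫ y, φ (p, y) ∂μη
    rw [hmul]
    exact mul_le_mul_of_nonneg_left (hinner p.1) hp
  -- assemble
  calc ∫ ω, max (ξ ω) (D.indicator η ω) ∂P
      = ∫ ω, (D.indicator (fun ω' => max (ξ ω') (η ω')) ω
          + Dᶜ.indicator (fun ω' => max (ξ ω') 0) ω) ∂P := by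
        refine integral_congr_ae (Filter.Eventually.of_forall fun ω => ?_)
        by_cases h : ω ∈ D
        · simp [Set.indicator_of_mem h,
            Set.indicator_of_notMem (show ω ∉ Dᶜ by simpa using h)]
        · simp [Set.indicator_of_notMem h,
            Set.indicator_of_mem (show ω ∈ Dᶜ by simpa using h)]
    _ = ∫ ω, D.indicator (fun ω' => max (ξ ω') (η ω')) ω ∂P
          + ∫ ω, Dᶜ.indicator (fun ω' => max (ξ ω') 0) ω ∂P :=
        integral_add (hmaxint.indicator hDm) hint0
    _ ≤ ∫ ω, D.indicator (fun ω' => max (ξ ω') (η ω')) ω ∂P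
          + ∫ ω, Dᶜ.indicator (fun ω' => max (ξ ω') (η ω')) ω ∂P :=
        add_le_add_right key _
    _ = ∫ ω, (D.indicator (fun ω' => max (ξ ω') (η ω')) ω
          + Dᶜ.indicator (fun ω' => max (ξ ω') (η ω')) ω) ∂P :=
        (integral_add (hmaxint.indicator hDm) hint1).symm
    _ = ∫ ω, max (ξ ω) (η ω) ∂P := by
        refine integral_congr_ae (Filter.Eventually.of_forall fun ω => ?_)
        exact Set.indicator_self_add_compl_apply D _ ω
end
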